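/- The IMU dynamics with accelerometer bias are NOT group affine on the TFG when the rotation increment is nontrivial: for Ω ∈ SO(3) with Ω ≠ I, and f(R,v,p,b) = (RΩ, v + Δt(g + R(a − b)), p + Δt v, b), there exist TFG elements χ, χ', η such that f(χ)⁻¹ f(χ • η) ≠ f(χ')⁻¹ f(χ' • η) (the group error propagation is state-dependent), for generic a, provided the bias component of η is nonzero. -/

import Mathlib

open Matrix

noncomputable section

abbrev V3 := Fin 3 → ℝ
abbrev M3 := Matrix (Fin 3) (Fin 3) ℝ

/-- `R` is a rotation matrix: orthogonal with determinant one. -/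
def IsSO3 (R : M3) : Prop := R * Rᵀ = 1 ∧ R.det = 1

/-- An element of the Two-Frames Group: `(R, v, p, b)`. -/
abbrev TFGel := M3 × V3 × V3 × V3

/-- The TFG composition law. -/
def tmul (x y : TFGel) : TFGel :=
  (x.1 * y.1, x.2.1 + x.1 *ᵥ y.2.1, x.2.2.1 + x.1 *ᵥ y.2.2.1,
    y.2.2.2 + y.1ᵀ *ᵥ x.2.2.2)

/-- The TFG identity element `(I, 0, 0, 0)`. -/
def tone : TFGel := (1, 0, 0, 0)

/-- The TFG inverse of `(R, v, p, b)`: `(Rᵀ, −Rᵀv, −Rᵀp, −Rb)`. -/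
def tinv (x : TFGel) : TFGel :=
  (x.1ᵀ, -(x.1ᵀ *ᵥ x.2.1), -(x.1ᵀ *ᵥ x.2.2.1), -(x.1 *ᵥ x.2.2.2))

/-- Discrete-time IMU dynamics on the TFG with a nontrivial rotation increment `Ω`:
`f(R,v,p,b) = (RΩ, v + Δt(g + R(a − b)), p + Δt·v, b)`. -/
def imuDynRot (Ω : M3) (g a : V3) (Δt : ℝ) (x : TFGel) : TFGel :=
  (x.1 * Ω, x.2.1 + Δt • (g + x.1 *ᵥ (a - x.2.2.2)), x.2.2.1 + Δt • x.2.1, x.2.2.2)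

def dD1 : M3 := !![1,0,0;0,-1,0;0,0,-1]
def dD2 : M3 := !![-1,0,0;0,1,0;0,0,-1]
def dP : M3 := !![0,-1,0;1,0,0;0,0,1]
def dQ : M3 := !![1,0,0;0,0,-1;0,1,0]

lemma so3_dD1 : IsSO3 dD1 := by
  constructor
  · ext i j; fin_cases i <;> fin_cases j <;>
      simp [dD1, Matrix.mul_apply, Matrix.transpose_apply, Fin.sum_univ_three, Matrix.one_apply, vecHead, vecTail]
  · simp [dD1, Matrix.det_fin_three]

lemma so3_dD2 : IsSO3 dD2 := by
  constructor
  · ext i j; fin_cases i <;> fin_cases j <;>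
      simp [dD2, Matrix.mul_apply, Matrix.transpose_apply, Fin.sum_univ_three, Matrix.one_apply, vecHead, vecTail]
  · simp [dD2, Matrix.det_fin_three]

lemma so3_dP : IsSO3 dP := by
  constructor
  · ext i j; fin_cases i <;> fin_cases j <;>
      simp [dP, Matrix.mul_apply, Matrix.transpose_apply, Fin.sum_univ_three, Matrix.one_apply, vecHead, vecTail]
  · simp [dP, Matrix.det_fin_three]

lemma so3_dQ : IsSO3 dQ := by
  constructor
  · ext i j; fin_cases i <;> fin_cases j <;>
      simp [dQ, Matrix.mul_apply, Matrix.transpose_apply, Fin.sum_univ_three, Matrix.one_apply, vecHead, vecTail]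
  · simp [dQ, Matrix.det_fin_three]

lemma comm_all_eq_one (Ω : M3) (h1 : Ω * Ωᵀ = 1) (hd : Ω.det = 1)
    (c1 : Ω * dD1 = dD1 * Ω) (c2 : Ω * dD2 = dD2 * Ω)
    (cP : Ω * dP = dP * Ω) (cQ : Ω * dQ = dQ * Ω) : Ω = 1 := by
  have e01 := congrFun (congrFun c1 0) 1
  have e02 := congrFun (congrFun c1 0) 2
  have e10 := congrFun (congrFun c1 1) 0
  have e20 := congrFun (congrFun c1 2) 0
  have e12 := congrFun (congrFun c2 1) 2
  have e21 := congrFun (congrFun c2 2) 1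
  have eP := congrFun (congrFun cP 0) 1
  have eQ := congrFun (congrFun cQ 1) 2
  have eN := congrFun (congrFun h1 0) 0
  simp [dD1, dD2, dP, dQ, Matrix.mul_apply, Matrix.transpose_apply, Fin.sum_univ_three,
    Matrix.one_apply, vecHead, vecTail] at e01 e02 e10 e20 e12 e21 eP eQ eN
  rw [Matrix.det_fin_three] at hd
  have z01 : Ω 0 1 = 0 := by linarith
  have z02 : Ω 0 2 = 0 := by linarith
  have z10 : Ω 1 0 = 0 := by linarith
  have z20 : Ω 2 0 = 0 := by linarith
  have z12 : Ω 1 2 = 0 := by linarith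
  have z21 : Ω 2 1 = 0 := by linarith
  have h00 : Ω 0 0 = 1 := by
    rw [z01, z02, z10, z20, z12, z21, ← eQ, ← eP] at hd
    rw [z01, z02] at eN
    ring_nf at hd eN
    linear_combination hd - Ω 0 0 * eN
  ext i j
  fin_cases i <;> fin_cases j <;> simp [Matrix.one_apply] <;> linarith


/-- The IMU dynamics with accelerometer bias are NOT group affine on the TFG when
the rotation increment `Ω ≠ I` is nontrivial: the left-invariant error propagation
`f(χ)⁻¹ • f(χ • η)` is state-dependent for suitable `a`, `g`, `Δt`, and TFG
elements `χ, χ', η` with nonzero bias component of `η`. -/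
theorem imu_rot_not_group_affine (Ω : M3) (hΩ : IsSO3 Ω) (hΩ1 : Ω ≠ 1) :
    ∃ (a g : V3) (Δt : ℝ) (χ χ' η : TFGel), Δt > 0 ∧
      IsSO3 χ.1 ∧ IsSO3 χ'.1 ∧ IsSO3 η.1 ∧ η.2.2.2 ≠ 0 ∧
      tmul (tinv (imuDynRot Ω g a Δt χ)) (imuDynRot Ω g a Δt (tmul χ η)) ≠
        tmul (tinv (imuDynRot Ω g a Δt χ')) (imuDynRot Ω g a Δt (tmul χ' η)) := by
  obtain ⟨hO, hdet⟩ := hΩ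
  have key : ∃ S : M3, IsSO3 S ∧ S * Ω ≠ Ω * S := by
    by_contra h
    push_neg at h
    exact hΩ1 (comm_all_eq_one Ω hO hdet (h dD1 so3_dD1).symm (h dD2 so3_dD2).symm
      (h dP so3_dP).symm (h dQ so3_dQ).symm)
  obtain ⟨S, hS, hSc⟩ := key
  set M : M3 := Sᵀ - Ωᵀ * Sᵀ * Ω with hM
  have hMne : M ≠ 0 := by
    intro h0
    apply hSc
    have h1 : Sᵀ = Ωᵀ * Sᵀ * Ω := sub_eq_zero.mp h0
    have h2 := congrArg Matrix.transpose h1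
    simp only [Matrix.transpose_mul, Matrix.transpose_transpose] at h2
    -- h2 : S = Ωᵀ * (S * Ω)  (up to assoc)
    have h3 : Ω * S = S * Ω := by
      conv_lhs => rw [h2]
      rw [← Matrix.mul_assoc, ← Matrix.mul_assoc, hO, Matrix.one_mul]
    exact h3.symm
  have hentry : ∃ i j, M i j ≠ 0 := by
    by_contra h
    push_neg at h
    exact hMne (by ext i j; simpa using h i j)
  obtain ⟨i, j, hij⟩ := hentry
  refine ⟨0, 0, 1, (1, 0, 0, Pi.single j 1), (1, 0, 0, 0), (S, 0, 0, fun _ => 1),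
    one_pos, ⟨by simp, by simp⟩, ⟨by simp, by simp⟩, hS, ?_, ?_⟩
  · intro h
    have := congrFun h 0
    norm_num at this
  · intro heq
    have h4 := congrFun (congrArg (fun x : TFGel => x.2.2.2) heq) i
    simp [tmul, tinv, imuDynRot, Matrix.mulVec_mulVec, Matrix.mulVec_neg] at h4
    have expand : ((Ωᵀ * Sᵀ) *ᵥ fun k => Ω k j) i = (Ωᵀ * Sᵀ * Ω) i j := by
      simp [Matrix.mulVec, dotProduct, Matrix.mul_apply, Matrix.transpose_apply,
        Fin.sum_univ_three]
    apply hij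
    have hMij : M i j = S j i - (Ωᵀ * Sᵀ * Ω) i j := by simp [hM, Matrix.transpose_apply]
    rw [hMij, ← expand]
    change 1 + S j i + -((Ωᵀ * Sᵀ) *ᵥ fun k => Ω k j) i = 1 at h4
    linarith [h4]
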